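/- Let r_1, ..., r_n be n distinct real numbers and let T > 1 be a real number. Then for every M > 0 there exists a real number R with M ≤ R ≤ M·T^n such that |e^{i r_j R} - 1| < 4π/T for all j = 1, ..., n. -/

import Mathlib

open Real Complex

lemma abs_exp_I_mul_sub_one_le (x : ℝ) :
    ‖Complex.exp (Complex.I * x) - 1‖ ≤ |x| := by
  have h : Complex.exp (Complex.I * x) - 1 =
      Complex.ofReal (Real.cos x - 1) + Complex.ofReal (Real.sin x) * Complex.I := by
    rw [mul_comm, Complex.exp_mul_I]
    push_cast
    ring
  rw [h, Complex.norm_add_mul_I]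
  have hle : (Real.cos x - 1) ^ 2 + Real.sin x ^ 2 ≤ x ^ 2 := by
    nlinarith [Real.sin_sq_add_cos_sq x, Real.one_sub_sq_div_two_le_cos (x := x),
      Real.cos_le_one x]
  calc Real.sqrt ((Real.cos x - 1) ^ 2 + Real.sin x ^ 2)
      ≤ Real.sqrt (x ^ 2) := Real.sqrt_le_sqrt hle
    _ = |x| := Real.sqrt_sq_eq_abs x

theorem simultaneous_dirichlet_approx (n : ℕ) (r : Fin n → ℝ)
    (hr : Function.Injective r) (T : ℝ) (hT : 1 < T) :
    ∀ M : ℝ, 0 < M → ∃ R : ℝ, M ≤ R ∧ R ≤ M * T ^ n ∧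
      ∀ j : Fin n, ‖Complex.exp (Complex.I * r j * R) - 1‖ < 4 * π / T := by
  intro M hM
  set Q : ℕ := ⌊T⌋₊ with hQdef
  have hT0 : (0:ℝ) < T := by linarith
  have hQ1 : 1 ≤ Q := Nat.le_floor (by exact_mod_cast hT.le)
  have hQ0 : (0:ℝ) < (Q:ℝ) := by exact_mod_cast hQ1
  have hQT : (Q:ℝ) ≤ T := Nat.floor_le hT0.le
  have hTQ : T < 2 * Q := by
    have h1 : T < (Q:ℝ) + 1 := Nat.lt_floor_add_one T
    have h2 : (1:ℝ) ≤ (Q:ℝ) := by exact_mod_cast hQ1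
    linarith
  set α : Fin n → ℝ := fun j => r j * M / (2 * π) with hαdef
  have hmap : ∀ k : ℕ, ∀ j : Fin n, ⌊(Q:ℝ) * Int.fract ((k:ℝ) * α j)⌋₊ < Q := by
    intro k j
    have h0 : 0 ≤ (Q:ℝ) * Int.fract ((k:ℝ) * α j) :=
      mul_nonneg hQ0.le (Int.fract_nonneg _)
    rw [Nat.floor_lt h0]
    calc (Q:ℝ) * Int.fract ((k:ℝ) * α j) < (Q:ℝ) * 1 :=
          (mul_lt_mul_iff_right₀ hQ0).mpr (Int.fract_lt_one _)
      _ = Q := mul_one _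
  set g : ℕ → (Fin n → Fin Q) := fun k j => ⟨⌊(Q:ℝ) * Int.fract ((k:ℝ) * α j)⌋₊, hmap k j⟩
    with hgdef
  obtain ⟨a, ha, b, hb, hab, hgab⟩ :=
    Finset.exists_ne_map_eq_of_card_lt_of_maps_to
      (s := Finset.range (Q ^ n + 1)) (t := (Finset.univ : Finset (Fin n → Fin Q)))
      (by simp) (fun a _ => Finset.mem_univ (g a))
  wlog hlt : a < b generalizing a b
  · exact this b hb a ha hab.symm hgab.symm (hab.lt_or_gt.resolve_left hlt)
  have key : ∀ j : Fin n,
      |((b:ℝ) - a) * α j - ((⌊(b:ℝ) * α j⌋ : ℝ) - ⌊(a:ℝ) * α j⌋)| < 1 / Q := by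
    intro j
    have hg : ⌊(Q:ℝ) * Int.fract ((a:ℝ) * α j)⌋₊ = ⌊(Q:ℝ) * Int.fract ((b:ℝ) * α j)⌋₊ := by
      have := congrFun hgab j
      simpa [hgdef, Fin.ext_iff] using this
    have ha1 : (⌊(Q:ℝ) * Int.fract ((a:ℝ) * α j)⌋₊ : ℝ) ≤ (Q:ℝ) * Int.fract ((a:ℝ) * α j) :=
      Nat.floor_le (mul_nonneg hQ0.le (Int.fract_nonneg _))
    have ha2 : (Q:ℝ) * Int.fract ((a:ℝ) * α j)
        < (⌊(Q:ℝ) * Int.fract ((a:ℝ) * α j)⌋₊ : ℝ) + 1 := Nat.lt_floor_add_one _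
    have hb1 : (⌊(Q:ℝ) * Int.fract ((a:ℝ) * α j)⌋₊ : ℝ) ≤ (Q:ℝ) * Int.fract ((b:ℝ) * α j) := by
      rw [hg]; exact Nat.floor_le (mul_nonneg hQ0.le (Int.fract_nonneg _))
    have hb2 : (Q:ℝ) * Int.fract ((b:ℝ) * α j)
        < (⌊(Q:ℝ) * Int.fract ((a:ℝ) * α j)⌋₊ : ℝ) + 1 := by
      rw [hg]; exact Nat.lt_floor_add_one _
    have hfr : |Int.fract ((b:ℝ) * α j) - Int.fract ((a:ℝ) * α j)| < 1 / Q := by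
      rw [abs_lt]
      constructor
      · have h5 : (Q:ℝ) * (Int.fract ((a:ℝ) * α j) - Int.fract ((b:ℝ) * α j)) < 1 := by
          linarith
        have h6 : Int.fract ((a:ℝ) * α j) - Int.fract ((b:ℝ) * α j) < 1 / Q :=
          (lt_div_iff₀ hQ0).mpr (by linarith)
        linarith
      · have h5 : (Q:ℝ) * (Int.fract ((b:ℝ) * α j) - Int.fract ((a:ℝ) * α j)) < 1 := by
          linarith
        exact (lt_div_iff₀ hQ0).mpr (by linarith)
    have hrw : ((b:ℝ) - a) * α j - ((⌊(b:ℝ) * α j⌋ : ℝ) - ⌊(a:ℝ) * α j⌋)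
        = Int.fract ((b:ℝ) * α j) - Int.fract ((a:ℝ) * α j) := by
      simp only [Int.fract]
      ring
    rw [hrw]
    exact hfr
  set q : ℕ := b - a with hqdef
  have hq1 : 1 ≤ q := by omega
  have hqQn : q ≤ Q ^ n := by
    have hb' : b < Q ^ n + 1 := Finset.mem_range.mp hb
    omega
  have hqcast : ((q:ℝ)) = (b:ℝ) - a := by
    rw [hqdef]; push_cast [Nat.cast_sub hlt.le]; ring
  refine ⟨(q:ℝ) * M, ?_, ?_, ?_⟩
  · have : (1:ℝ) ≤ (q:ℝ) := by exact_mod_cast hq1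
    nlinarith
  · have h1 : ((q:ℝ)) ≤ (Q:ℝ) ^ n := by exact_mod_cast hqQn
    have h2 : (Q:ℝ) ^ n ≤ T ^ n := pow_le_pow_left₀ hQ0.le hQT n
    nlinarith
  · intro j
    set m : ℤ := ⌊(b:ℝ) * α j⌋ - ⌊(a:ℝ) * α j⌋ with hmdef
    have hπ0 : (0:ℝ) < π := Real.pi_pos
    set x : ℝ := 2 * π * ((q:ℝ) * α j - m) with hxdef
    have hθ : r j * ((q:ℝ) * M) = x + m * (2 * π) := by
      rw [hxdef, hαdef, hqdef]
      field_simp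
      ring
    have hCeq : Complex.I * (r j : ℂ) * (((q:ℝ) * M : ℝ) : ℂ)
        = Complex.I * (x : ℂ) + (m : ℂ) * (2 * (π:ℂ) * Complex.I) := by
      calc Complex.I * (r j : ℂ) * (((q:ℝ) * M : ℝ) : ℂ)
          = Complex.I * ((r j * ((q:ℝ) * M) : ℝ) : ℂ) := by push_cast; ring
        _ = Complex.I * ((x + m * (2 * π) : ℝ) : ℂ) := by rw [hθ]
        _ = Complex.I * (x : ℂ) + (m : ℂ) * (2 * (π:ℂ) * Complex.I) := by push_cast; ring
    have hexp : Complex.exp (Complex.I * (r j : ℂ) * (((q:ℝ) * M : ℝ) : ℂ))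
        = Complex.exp (Complex.I * (x : ℂ)) := by
      rw [hCeq, Complex.exp_add, Complex.exp_int_mul_two_pi_mul_I, mul_one]
    rw [hexp]
    have hmcast : ((m:ℝ)) = ((⌊(b:ℝ) * α j⌋ : ℝ) - ⌊(a:ℝ) * α j⌋) := by
      rw [hmdef]; push_cast; ring
    have hk : |(q:ℝ) * α j - (m:ℝ)| < 1 / Q := by
      rw [hqcast, hmcast]; exact key j
    have hx : |x| < 2 * π * (1 / Q) := by
      rw [hxdef, abs_mul, abs_of_pos (by linarith : (0:ℝ) < 2 * π)]
      exact (mul_lt_mul_iff_right₀ (by linarith)).mpr hk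
    have h4 : 2 * π * (1 / Q) < 4 * π / T := by
      rw [mul_one_div, div_lt_div_iff₀ hQ0 hT0]
      nlinarith
    calc ‖Complex.exp (Complex.I * (x : ℂ)) - 1‖
        ≤ |x| := abs_exp_I_mul_sub_one_le x
      _ < 4 * π / T := by linarith
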